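/- Let V be a finite-dimensional F₂-vector space and v ∈ V a nonzero vector. Then for every nonzero w ∈ V, the product over all linear forms l : V → F₂ with l(v) = 1 of the values l(w) equals 1 if w = v, and equals 0 otherwise. In other words, the polynomial function ∏_{l ∈ V*, l(v)=1} l is the indicator function of {v} on V ∖ {0}. -/

import Mathlib

theorem sep (V : Type) [AddCommGroup V] [Module (ZMod 2) V]
    (v : V) (hv : v ≠ 0) (w : V) (hw : w ≠ 0) (hwv : w ≠ v) :
    ∃ l : Module.Dual (ZMod 2) V, l v = 1 ∧ l w = 0 := by
  have hns : w ∉ Submodule.span (ZMod 2) ({v} : Set V) := by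
    rw [Submodule.mem_span_singleton]
    rintro ⟨c, rfl⟩
    rcases (by decide : ∀ c : ZMod 2, c = 0 ∨ c = 1) c with rfl | rfl <;> simp_all
  have hli : LinearIndepOn (ZMod 2) id ({w, v} : Set V) :=
    LinearIndepOn.id_insert (linearIndepOn_singleton_iff (R := ZMod 2) (v := id) |>.mpr hv) hns
  let b := Module.Basis.extend hli
  have hvmem : v ∈ hli.extend (Set.subset_univ _) := hli.subset_extend _ (by simp)
  have hwmem : w ∈ hli.extend (Set.subset_univ _) := hli.subset_extend _ (by simp)
  have hbv : b ⟨v, hvmem⟩ = v := Module.Basis.extend_apply_self hli _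
  have hbw : b ⟨w, hwmem⟩ = w := Module.Basis.extend_apply_self hli _
  refine ⟨b.coord ⟨v, hvmem⟩, ?_, ?_⟩
  · have h1 : b.repr (b ⟨v, hvmem⟩) ⟨v, hvmem⟩ = 1 := by simp
    rw [hbv] at h1
    simpa [Module.Basis.coord_apply] using h1
  · have h1 : b.repr (b ⟨w, hwmem⟩) ⟨v, hvmem⟩ = 0 := by
      rw [Module.Basis.repr_self, Finsupp.single_eq_of_ne]
      exact fun h => hwv (congrArg Subtype.val h).symm
    rw [hbw] at h1
    simpa [Module.Basis.coord_apply] using h1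

open Classical in
theorem stmt1 (V : Type) [AddCommGroup V] [Module (ZMod 2) V]
    [FiniteDimensional (ZMod 2) V]
    (v : V) (hv : v ≠ 0) (w : V) (hw : w ≠ 0) :
    (∏ᶠ (l : Module.Dual (ZMod 2) V) (_ : l v = 1), l w) = if w = v then 1 else 0 := by
  have : Module.Finite (ZMod 2) (Module.Dual (ZMod 2) V) := inferInstance
  have hfin : Finite (Module.Dual (ZMod 2) V) := Module.finite_iff_finite.mp this
  have := Fintype.ofFinite (Module.Dual (ZMod 2) V)
  have key : (∏ᶠ (l : Module.Dual (ZMod 2) V) (_ : l v = 1), l w)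
      = ∏ l : Module.Dual (ZMod 2) V, if l v = 1 then l w else 1 := by
    rw [← finprod_eq_prod_of_fintype]
    exact finprod_congr fun l => finprod_eq_if
  rw [key]
  by_cases hwv : w = v
  · subst hwv
    simp only [if_pos rfl]
    apply Finset.prod_eq_one
    intro l _
    split <;> simp_all
  · rw [if_neg hwv]
    obtain ⟨l, hl1, hl0⟩ := sep V v hv w hw hwv
    exact Finset.prod_eq_zero (Finset.mem_univ l) (by rw [if_pos hl1, hl0])
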